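/- arXiv:1904.07109 — 4 statements merged into one kernel-verified Lean document; each statement's English description precedes it below -/
import Mathlib

section
/- For all (t,τ) ∈ [-1,1]×[-1,1], the Green's function G satisfies G(t,τ) ≥ 0, and G(t,τ) > 0 whenever (t,τ) ∈ (-1,1)×(-1,1). -/
noncomputable def greenG (μ t τ : ℝ) : ℝ :=
  (1 / Real.Gamma μ) *
    (if τ ≤ 0 then
      (if τ ≤ t then (1 + τ) ^ (μ - 1)
       else (1 + τ) ^ (μ - 1) - (τ - t) ^ (μ - 1))
    else
      (if t ≤ τ then (1 - τ) ^ (μ - 1)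
       else (1 - τ) ^ (μ - 1) - (t - τ) ^ (μ - 1)))

theorem green_nonneg_pos (μ : ℝ) (hμ1 : 1 < μ) (hμ2 : μ ≤ 2) :
    (∀ t ∈ Set.Icc (-1 : ℝ) 1, ∀ τ ∈ Set.Icc (-1 : ℝ) 1, 0 ≤ greenG μ t τ) ∧
    (∀ t ∈ Set.Ioo (-1 : ℝ) 1, ∀ τ ∈ Set.Ioo (-1 : ℝ) 1, 0 < greenG μ t τ) := by
  have hΓ : 0 < Real.Gamma μ := Real.Gamma_pos_of_pos (by linarith)
  have hc : 0 < 1 / Real.Gamma μ := by positivity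
  have he : 0 < μ - 1 := by linarith
  constructor
  · intro t ht τ hτ
    obtain ⟨ht1, ht2⟩ := ht
    obtain ⟨hτ1, hτ2⟩ := hτ
    unfold greenG
    apply mul_nonneg hc.le
    split_ifs with h1 h2 h3
    · exact Real.rpow_nonneg (by linarith) _
    · have := Real.rpow_le_rpow (x := τ - t) (y := 1 + τ) (by linarith) (by linarith) he.le
      linarith
    · exact Real.rpow_nonneg (by linarith) _
    · have := Real.rpow_le_rpow (x := t - τ) (y := 1 - τ) (by linarith) (by linarith) he.le
      linarith
  · intro t ht τ hτ
    obtain ⟨ht1, ht2⟩ := ht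
    obtain ⟨hτ1, hτ2⟩ := hτ
    unfold greenG
    apply mul_pos hc
    split_ifs with h1 h2 h3
    · exact Real.rpow_pos_of_pos (by linarith) _
    · have := Real.rpow_lt_rpow (x := τ - t) (y := 1 + τ) (by linarith) (by linarith) he
      linarith
    · exact Real.rpow_pos_of_pos (by linarith) _
    · have := Real.rpow_lt_rpow (x := t - τ) (y := 1 - τ) (by linarith) (by linarith) he
      linarith
end

section
/- For all (t,τ) ∈ [-1,1]×[-1,1], the Green's function satisfies the upper bound G(t,τ) ≤ (1/Γ(μ))·(1-|τ|)^{μ-1}. -/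
theorem green_upper_bound (μ : ℝ) (hμ1 : 1 < μ) (hμ2 : μ ≤ 2) :
    ∀ t ∈ Set.Icc (-1 : ℝ) 1, ∀ τ ∈ Set.Icc (-1 : ℝ) 1,
      greenG μ t τ ≤ (1 / Real.Gamma μ) * (1 - |τ|) ^ (μ - 1) := by
  intro t ht τ hτ
  have hΓ : 0 < Real.Gamma μ := Real.Gamma_pos_of_pos (by linarith)
  have hΓ' : (0:ℝ) ≤ 1 / Real.Gamma μ := by positivity
  unfold greenG
  apply mul_le_mul_of_nonneg_left _ hΓ'
  split_ifs with h1 h2 h3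
  · rw [abs_of_nonpos h1, sub_neg_eq_add]
  · rw [abs_of_nonpos h1, sub_neg_eq_add]
    have : (0:ℝ) ≤ (τ - t) ^ (μ - 1) := Real.rpow_nonneg (by linarith) _
    linarith
  · rw [abs_of_pos (lt_of_not_ge h1)]
  · rw [abs_of_pos (lt_of_not_ge h1)]
    have : (0:ℝ) ≤ (t - τ) ^ (μ - 1) := Real.rpow_nonneg (by linarith [lt_of_not_ge h3]) _
    linarith
end

section
/- Let y : (-1,1) → ℝ be continuous with y(t) ≥ γ > 0 for all t ∈ (-1,1), and suppose ∫_{-1}^{1} (1-|τ|)^{μ-1} y(τ) dτ < ∞. Then the function x(t) = ∫_{-1}^{1} G(t,τ) y(τ) dτ satisfies x(t) ≥ 2γ(1-|t|^μ)/Γ(μ+1) for all t ∈ [-1,1]; in particular, x(t) > 0 for t ∈ (-1,1). -/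
open MeasureTheory Set


open MeasureTheory Set

lemma greenG_meas (μ t : ℝ) : Measurable (greenG μ t) := by
  unfold greenG
  apply Measurable.const_mul
  apply Measurable.ite (measurableSet_le measurable_id measurable_const) <;>
  apply Measurable.ite <;>
  first
    | exact measurableSet_le measurable_id measurable_const
    | exact measurableSet_le measurable_const measurable_id
    | fun_prop

lemma greenG_nonneg {μ t τ : ℝ} (hμ : 1 < μ) (ht : t ∈ Icc (-1:ℝ) 1)
    (hτ : τ ∈ Icc (-1:ℝ) 1) : 0 ≤ greenG μ t τ := by
  have hΓ : 0 < Real.Gamma μ := Real.Gamma_pos_of_pos (by linarith)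
  obtain ⟨ht1, ht2⟩ := ht
  obtain ⟨hτ1, hτ2⟩ := hτ
  unfold greenG
  apply mul_nonneg (by positivity)
  split_ifs with h1 h2 h3
  · exact Real.rpow_nonneg (by linarith) _
  · have h2' : t < τ := not_le.mp h2
    have := Real.rpow_le_rpow (x := τ - t) (by linarith) (by linarith : τ - t ≤ 1 + τ)
      (by linarith : (0:ℝ) ≤ μ - 1)
    linarith
  · exact Real.rpow_nonneg (by linarith) _
  · have h3' : τ < t := not_le.mp h3
    have := Real.rpow_le_rpow (x := t - τ) (by linarith) (by linarith : t - τ ≤ 1 - τ)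
      (by linarith : (0:ℝ) ≤ μ - 1)
    linarith

lemma greenG_le {μ : ℝ} (hμ : 1 < μ) (t τ : ℝ) :
    greenG μ t τ ≤ (1 / Real.Gamma μ) * (1 - |τ|) ^ (μ - 1) := by
  have hΓ : 0 < Real.Gamma μ := Real.Gamma_pos_of_pos (by linarith)
  unfold greenG
  apply mul_le_mul_of_nonneg_left _ (by positivity)
  split_ifs with h1 h2 h3
  · rw [abs_of_nonpos h1]
    have e : 1 - -τ = 1 + τ := by ring
    rw [e]
  · rw [abs_of_nonpos h1]
    have e : 1 - -τ = 1 + τ := by ring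
    rw [e]
    have : (0:ℝ) ≤ (τ - t) ^ (μ - 1) :=
      Real.rpow_nonneg (by linarith [not_le.mp h2]) _
    linarith
  · rw [abs_of_pos (not_le.mp h1)]
  · rw [abs_of_pos (not_le.mp h1)]
    have : (0:ℝ) ≤ (t - τ) ^ (μ - 1) :=
      Real.rpow_nonneg (by linarith [not_le.mp h3]) _
    linarith

lemma greenG_ge {μ t τ : ℝ} (hμ : 1 < μ) :
    (1 / Real.Gamma μ) *
      ((1 - |τ|) ^ (μ - 1) - (uIoc t 0).indicator (fun _ => |t| ^ (μ - 1)) τ)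
      ≤ greenG μ t τ := by
  have hΓ : 0 < Real.Gamma μ := Real.Gamma_pos_of_pos (by linarith)
  have hind : 0 ≤ (uIoc t 0).indicator (fun _ => |t| ^ (μ - 1)) τ :=
    Set.indicator_nonneg (fun _ _ => Real.rpow_nonneg (abs_nonneg t) _) τ
  unfold greenG
  apply mul_le_mul_of_nonneg_left _ (by positivity)
  split_ifs with h1 h2 h3
  · rw [abs_of_nonpos h1]
    have e : 1 - -τ = 1 + τ := by ring
    rw [e]
    linarith
  · have h2' : t < τ := not_le.mp h2
    have hmem : τ ∈ uIoc t 0 := Set.mem_uIoc.mpr (Or.inl ⟨h2', h1⟩)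
    rw [Set.indicator_of_mem hmem, abs_of_nonpos h1, abs_of_nonpos (by linarith : t ≤ 0)]
    have e : 1 - -τ = 1 + τ := by ring
    rw [e]
    have : (τ - t) ^ (μ - 1) ≤ (-t) ^ (μ - 1) :=
      Real.rpow_le_rpow (by linarith) (by linarith) (by linarith)
    linarith
  · rw [abs_of_pos (not_le.mp h1)]
    linarith
  · have h1' : 0 < τ := not_le.mp h1
    have h3' : τ < t := not_le.mp h3
    have hmem : τ ∈ uIoc t 0 := Set.mem_uIoc.mpr (Or.inr ⟨h1', h3'.le⟩)
    rw [Set.indicator_of_mem hmem, abs_of_pos h1', abs_of_pos (by linarith : 0 < t)]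
    have : (t - τ) ^ (μ - 1) ≤ t ^ (μ - 1) :=
      Real.rpow_le_rpow (by linarith) (by linarith) (by linarith)
    linarith

theorem solution_lower_bound (μ : ℝ) (hμ1 : 1 < μ) (hμ2 : μ ≤ 2)
    (y : ℝ → ℝ) (hy : ContinuousOn y (Set.Ioo (-1) 1))
    (γ : ℝ) (hγ : 0 < γ)
    (hyγ : ∀ t ∈ Set.Ioo (-1 : ℝ) 1, γ ≤ y t)
    (hyint : MeasureTheory.IntegrableOn
      (fun τ => (1 - |τ|) ^ (μ - 1) * y τ) (Set.Ioo (-1 : ℝ) 1))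
    (x : ℝ → ℝ)
    (hx : ∀ t, x t = ∫ τ in (-1 : ℝ)..1, greenG μ t τ * y τ) :
    (∀ t ∈ Set.Icc (-1 : ℝ) 1,
      2 * γ * (1 - |t| ^ μ) / Real.Gamma (μ + 1) ≤ x t) ∧
    (∀ t ∈ Set.Ioo (-1 : ℝ) 1, 0 < x t) := by
  have hμ0 : (0:ℝ) < μ := by linarith
  have hΓ : 0 < Real.Gamma μ := Real.Gamma_pos_of_pos hμ0
  have hΓ1 : Real.Gamma (μ + 1) = μ * Real.Gamma μ := Real.Gamma_add_one (by linarith)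
  set f : ℝ → ℝ := fun τ => (1 - |τ|) ^ (μ - 1) with hfdef
  have hfmeas : Measurable f := by fun_prop
  have hf_nonneg : ∀ τ ∈ Icc (-1:ℝ) 1, 0 ≤ f τ := by
    intro τ hτ
    have : |τ| ≤ 1 := abs_le.mpr ⟨hτ.1, hτ.2⟩
    exact Real.rpow_nonneg (by linarith) _
  have hy0 : ∀ τ ∈ Ioo (-1:ℝ) 1, 0 ≤ y τ := fun τ hτ => le_trans hγ.le (hyγ τ hτ)
  -- integrability of f on Ioo(-1,1)
  have hf_int : IntegrableOn f (Ioo (-1:ℝ) 1) := by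
    apply Integrable.mono' (hyint.const_mul (1/γ))
    · exact hfmeas.aestronglyMeasurable.restrict
    · rw [MeasureTheory.ae_restrict_iff' measurableSet_Ioo]
      filter_upwards with τ hτ
      have hfτ : 0 ≤ f τ := hf_nonneg τ (Ioo_subset_Icc_self hτ)
      rw [Real.norm_eq_abs, abs_of_nonneg hfτ]
      have h := mul_le_mul_of_nonneg_left (hyγ τ hτ) hfτ
      calc f τ = 1/γ * (f τ * γ) := by field_simp
        _ ≤ 1/γ * (f τ * y τ) := by
            apply mul_le_mul_of_nonneg_left h (by positivity)
  -- key lower bound for all t in Icc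
  have key : ∀ t ∈ Icc (-1:ℝ) 1, 2 * γ * (1 - |t| ^ μ) / Real.Gamma (μ + 1) ≤ x t := by
    intro t ht
    set S : Set ℝ := uIoc t 0 with hSdef
    set c : ℝ := |t| ^ (μ - 1) with hcdef
    set L : ℝ → ℝ := fun τ => γ * (1 / Real.Gamma μ * (f τ - S.indicator (fun _ => c) τ))
      with hLdef
    -- integrability of the integrand
    have hGy_meas : AEStronglyMeasurable (fun τ => greenG μ t τ * y τ)
        (volume.restrict (Ioo (-1:ℝ) 1)) :=
      ((greenG_meas μ t).aestronglyMeasurable.restrict).mul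
        (hy.aestronglyMeasurable measurableSet_Ioo)
    have hGy_int : IntegrableOn (fun τ => greenG μ t τ * y τ) (Ioo (-1:ℝ) 1) := by
      apply Integrable.mono' (hyint.const_mul (1/Real.Gamma μ)) hGy_meas
      rw [MeasureTheory.ae_restrict_iff' measurableSet_Ioo]
      filter_upwards with τ hτ
      have hG0 : 0 ≤ greenG μ t τ := greenG_nonneg hμ1 ht (Ioo_subset_Icc_self hτ)
      rw [Real.norm_eq_abs, abs_of_nonneg (mul_nonneg hG0 (hy0 τ hτ))]
      calc greenG μ t τ * y τ ≤ (1 / Real.Gamma μ * f τ) * y τ := by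
            apply mul_le_mul_of_nonneg_right (greenG_le hμ1 t τ) (hy0 τ hτ)
        _ = 1 / Real.Gamma μ * (f τ * y τ) := by ring
    -- integrability of the indicator and L
    have hind_int : IntegrableOn (S.indicator (fun _ => c)) (Ioo (-1:ℝ) 1) := by
      apply Integrable.indicator _ measurableSet_uIoc
      exact (integrableOn_const_iff (C := c)).mpr (Or.inr (by simp [Real.volume_Ioo]))
    have hL_int : IntegrableOn L (Ioo (-1:ℝ) 1) := by
      apply Integrable.const_mul
      apply Integrable.const_mul
      exact hf_int.sub hind_int
    -- pointwise comparison
    have hpt : ∀ τ ∈ Ioo (-1:ℝ) 1, L τ ≤ greenG μ t τ * y τ := by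
      intro τ hτ
      have hG0 : 0 ≤ greenG μ t τ := greenG_nonneg hμ1 ht (Ioo_subset_Icc_self hτ)
      calc L τ ≤ γ * greenG μ t τ :=
            mul_le_mul_of_nonneg_left (greenG_ge hμ1) hγ.le
        _ = greenG μ t τ * γ := mul_comm _ _
        _ ≤ greenG μ t τ * y τ := mul_le_mul_of_nonneg_left (hyγ τ hτ) hG0
    have hmono : ∫ τ in Ioo (-1:ℝ) 1, L τ ≤ ∫ τ in Ioo (-1:ℝ) 1, greenG μ t τ * y τ :=
      setIntegral_mono_on hL_int hGy_int measurableSet_Ioo hpt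
    -- value of indicator integral
    have hvolS : (volume (Ioo (-1:ℝ) 1 ∩ S)).toReal = |t| := by
      have hle : volume (Ioo (-1:ℝ) 1 ∩ S) ≤ ENNReal.ofReal |t| := by
        calc volume (Ioo (-1:ℝ) 1 ∩ S) ≤ volume S := measure_mono inter_subset_right
          _ = ENNReal.ofReal |t| := by
            rw [hSdef, uIoc, Real.volume_Ioc]
            congr 1
            rw [max_sub_min_eq_abs, zero_sub, abs_neg]
      have hge : ENNReal.ofReal |t| ≤ volume (Ioo (-1:ℝ) 1 ∩ S) := by
        have hsub : Ioo (t ⊓ 0) (t ⊔ 0) ⊆ Ioo (-1:ℝ) 1 ∩ S := by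
          intro z hz
          refine ⟨?_, Ioo_subset_Ioc_self hz⟩
          constructor
          · have : (-1:ℝ) ≤ t ⊓ 0 := le_inf ht.1 (by norm_num)
            linarith [hz.1]
          · have : t ⊔ 0 ≤ 1 := sup_le ht.2 (by norm_num)
            linarith [hz.2]
        calc ENNReal.ofReal |t| = volume (Ioo (t ⊓ 0) (t ⊔ 0)) := by
              rw [Real.volume_Ioo, max_sub_min_eq_abs, zero_sub, abs_neg]
          _ ≤ volume (Ioo (-1:ℝ) 1 ∩ S) := measure_mono hsub
      rw [le_antisymm hle hge, ENNReal.toReal_ofReal (abs_nonneg t)]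
    have hindval : ∫ τ in Ioo (-1:ℝ) 1, S.indicator (fun _ => c) τ = |t| * c := by
      rw [MeasureTheory.setIntegral_indicator measurableSet_uIoc,
        MeasureTheory.setIntegral_const, smul_eq_mul, measureReal_def, hvolS]
    -- value of ∫ f over Ioo(-1,1)
    have hfint_val : ∫ τ in Ioo (-1:ℝ) 1, f τ = 2 / μ := by
      have h1 : IntervalIntegrable f volume (-1) 1 :=
        (intervalIntegrable_iff_integrableOn_Ioo_of_le (by norm_num)).mpr hf_int
      have i1 : IntervalIntegrable f volume (-1) 0 := by
        apply h1.mono_set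
        rw [Set.uIcc_of_le (by norm_num : (-1:ℝ) ≤ 0), Set.uIcc_of_le (by norm_num : (-1:ℝ) ≤ 1)]
        exact Icc_subset_Icc le_rfl (by norm_num)
      have i2 : IntervalIntegrable f volume 0 1 := by
        apply h1.mono_set
        rw [Set.uIcc_of_le (by norm_num : (0:ℝ) ≤ 1), Set.uIcc_of_le (by norm_num : (-1:ℝ) ≤ 1)]
        exact Icc_subset_Icc (by norm_num) le_rfl
      have e1 : ∫ τ in (-1:ℝ)..0, f τ = 1 / μ := by
        have : ∫ τ in (-1:ℝ)..0, f τ = ∫ τ in (-1:ℝ)..0, (τ + 1) ^ (μ - 1) := by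
          apply intervalIntegral.integral_congr
          intro τ hτ
          rw [Set.uIcc_of_le (by norm_num : (-1:ℝ) ≤ 0)] at hτ
          show (1 - |τ|) ^ (μ - 1) = (τ + 1) ^ (μ - 1)
          rw [abs_of_nonpos hτ.2]
          ring_nf
        rw [this, intervalIntegral.integral_comp_add_right (fun u => u ^ (μ - 1)) 1]
        norm_num
        rw [integral_rpow (Or.inl (by linarith))]
        rw [sub_add_cancel, Real.one_rpow, Real.zero_rpow (by linarith)]
        ring
      have e2 : ∫ τ in (0:ℝ)..1, f τ = 1 / μ := by
        have : ∫ τ in (0:ℝ)..1, f τ = ∫ τ in (0:ℝ)..1, (1 - τ) ^ (μ - 1) := by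
          apply intervalIntegral.integral_congr
          intro τ hτ
          rw [Set.uIcc_of_le (by norm_num : (0:ℝ) ≤ 1)] at hτ
          show (1 - |τ|) ^ (μ - 1) = (1 - τ) ^ (μ - 1)
          rw [abs_of_nonneg hτ.1]
        rw [this, intervalIntegral.integral_comp_sub_left (fun u => u ^ (μ - 1)) 1]
        norm_num
        rw [integral_rpow (Or.inl (by linarith))]
        rw [sub_add_cancel, Real.one_rpow, Real.zero_rpow (by linarith)]
        ring
      have : ∫ τ in (-1:ℝ)..1, f τ = 2 / μ := by
        rw [← intervalIntegral.integral_add_adjacent_intervals i1 i2, e1, e2]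
        ring
      rw [← MeasureTheory.integral_Ioc_eq_integral_Ioo,
        ← intervalIntegral.integral_of_le (by norm_num : (-1:ℝ) ≤ 1)]
      exact this
    -- |t| * c = |t| ^ μ
    have habs : |t| * c = |t| ^ μ := by
      rcases eq_or_ne t 0 with h | h
      · simp [hcdef, h, Real.zero_rpow (ne_of_gt hμ0)]
      · rw [hcdef]
        calc |t| * |t| ^ (μ - 1) = |t| ^ (1:ℝ) * |t| ^ (μ - 1) := by rw [Real.rpow_one]
          _ = |t| ^ (1 + (μ - 1)) := (Real.rpow_add (abs_pos.mpr h) _ _).symm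
          _ = |t| ^ μ := by ring_nf
    -- compute ∫ L
    have hLval : ∫ τ in Ioo (-1:ℝ) 1, L τ
        = γ * (1 / Real.Gamma μ * (2 / μ - |t| ^ μ)) := by
      rw [hLdef]
      rw [MeasureTheory.integral_const_mul, MeasureTheory.integral_const_mul,
        MeasureTheory.integral_sub hf_int hind_int, hfint_val, hindval, habs]
    -- arithmetic comparison
    have harith : 2 * γ * (1 - |t| ^ μ) / Real.Gamma (μ + 1)
        ≤ γ * (1 / Real.Gamma μ * (2 / μ - |t| ^ μ)) := by
      have hΓne : Real.Gamma μ ≠ 0 := ne_of_gt hΓ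
      have hμne : μ ≠ 0 := ne_of_gt hμ0
      rw [hΓ1, div_le_iff₀ (by positivity)]
      have hr : γ * (1 / Real.Gamma μ * (2 / μ - |t| ^ μ)) * (μ * Real.Gamma μ)
          = γ * (2 - μ * |t| ^ μ) := by field_simp
      rw [hr]
      nlinarith [mul_nonneg (mul_nonneg (sub_nonneg.mpr hμ2) hγ.le)
        (Real.rpow_nonneg (abs_nonneg t) μ)]
    have hxe : x t = ∫ τ in Ioo (-1:ℝ) 1, greenG μ t τ * y τ := by
      rw [hx t, intervalIntegral.integral_of_le (by norm_num : (-1:ℝ) ≤ 1),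
        MeasureTheory.integral_Ioc_eq_integral_Ioo]
    calc 2 * γ * (1 - |t| ^ μ) / Real.Gamma (μ + 1)
        ≤ γ * (1 / Real.Gamma μ * (2 / μ - |t| ^ μ)) := harith
      _ = ∫ τ in Ioo (-1:ℝ) 1, L τ := hLval.symm
      _ ≤ ∫ τ in Ioo (-1:ℝ) 1, greenG μ t τ * y τ := hmono
      _ = x t := hxe.symm
  refine ⟨key, ?_⟩
  intro t htIoo
  have h1 := key t (Ioo_subset_Icc_self htIoo)
  have habs1 : |t| < 1 := abs_lt.mpr ⟨htIoo.1, htIoo.2⟩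
  have hlt : |t| ^ μ < 1 := Real.rpow_lt_one (abs_nonneg t) habs1 hμ0
  have hpos : 0 < 2 * γ * (1 - |t| ^ μ) / Real.Gamma (μ + 1) := by
    apply div_pos (by nlinarith) (Real.Gamma_pos_of_pos (by linarith))
  linarith
end

section
/- Let 1 < μ ≤ 2, let q : (-1,1) → [0,∞) and y : (-1,1) → (0,∞) be continuous with ∫_{-1}^1 (1-|t|)^{μ-1} q(t) dt < ∞, and suppose a sequence of continuous symmetric functions x_n : [-1,1] → ℝ satisfies x_n(t) = ∫_{-1}^1 G(t,τ) g_n(τ) dτ where the g_n are continuous, and 0 ≤ g_n(τ) ≤ q(τ) for all n and τ. Then the family {x_n} is uniformly bounded by (1/Γ(μ))∫_{-1}^1 (1-|τ|)^{μ-1} q(τ) dτ and equicontinuous on [-1,1], hence has a uniformly convergent subsequence. -/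
lemma greenG_eq {μ : ℝ} (hμ1 : 1 < μ) (t τ : ℝ) :
    greenG μ t τ = (1 / Real.Gamma μ) *
      ((1 - |τ|) ^ (μ - 1) -
        (if τ ≤ 0 then max (τ - t) 0 else max (t - τ) 0) ^ (μ - 1)) := by
  have hne : μ - 1 ≠ 0 := by linarith
  unfold greenG
  rcases le_or_gt τ 0 with hτ | hτ
  · rw [if_pos hτ, if_pos hτ, abs_of_nonpos hτ]
    rcases le_or_gt τ t with h | h
    · rw [if_pos h, max_eq_right (by linarith), Real.zero_rpow hne]
      ring_nf
    · rw [if_neg (not_le.mpr h), max_eq_left (by linarith)]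
      ring_nf
  · rw [if_neg (not_le.mpr hτ), if_neg (not_le.mpr hτ), abs_of_pos hτ]
    rcases le_or_gt t τ with h | h
    · rw [if_pos h, max_eq_right (by linarith), Real.zero_rpow hne, sub_zero]
    · rw [if_neg (not_le.mpr h), max_eq_left (by linarith)]

lemma greenG_cont_t {μ : ℝ} (hμ1 : 1 < μ) (τ : ℝ) :
    Continuous fun t => greenG μ t τ := by
  have : (fun t => greenG μ t τ) = fun t => (1 / Real.Gamma μ) *
      ((1 - |τ|) ^ (μ - 1) -
        (if τ ≤ 0 then max (τ - t) 0 else max (t - τ) 0) ^ (μ - 1)) := by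
    funext t; exact greenG_eq hμ1 t τ
  rw [this]
  apply continuous_const.mul
  apply continuous_const.sub
  apply Continuous.rpow_const _ (fun _ => Or.inr (by linarith))
  rcases le_or_gt τ 0 with hτ | hτ
  · simp only [if_pos hτ]
    exact (continuous_const.sub continuous_id).max continuous_const
  · simp only [if_neg (not_le.mpr hτ)]
    exact (continuous_id.sub continuous_const).max continuous_const

lemma greenG_meas_τ {μ : ℝ} (hμ1 : 1 < μ) (t : ℝ) :
    Measurable fun τ => greenG μ t τ := by
  have : (fun τ => greenG μ t τ) = fun τ => (1 / Real.Gamma μ) *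
      ((1 - |τ|) ^ (μ - 1) -
        (if τ ≤ 0 then max (τ - t) 0 else max (t - τ) 0) ^ (μ - 1)) := by
    funext τ; exact greenG_eq hμ1 t τ
  rw [this]
  apply measurable_const.mul
  apply Measurable.sub
  · exact (((continuous_const.sub continuous_abs)).rpow_const
      (fun _ => Or.inr (by linarith))).measurable
  · simp only [apply_ite (fun r : ℝ => r ^ (μ - 1))]
    apply Measurable.ite measurableSet_Iic
    · exact (((continuous_id.sub continuous_const).max continuous_const).rpow_const
        (fun _ => Or.inr (by linarith))).measurable
    · exact (((continuous_const.sub continuous_id).max continuous_const).rpow_const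
        (fun _ => Or.inr (by linarith))).measurable

lemma greenG_bounds {μ : ℝ} (hμ1 : 1 < μ) {t τ : ℝ}
    (ht : t ∈ Set.Icc (-1 : ℝ) 1) (hτ : τ ∈ Set.Icc (-1 : ℝ) 1) :
    0 ≤ greenG μ t τ ∧ greenG μ t τ ≤ (1 / Real.Gamma μ) * (1 - |τ|) ^ (μ - 1) := by
  have hΓ : 0 < Real.Gamma μ := Real.Gamma_pos_of_pos (by linarith)
  have habs : |τ| ≤ 1 := abs_le.mpr ⟨hτ.1, hτ.2⟩
  rw [greenG_eq hμ1 t τ]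
  set D := (if τ ≤ 0 then max (τ - t) 0 else max (t - τ) 0) with hD
  have hD0 : 0 ≤ D := by rw [hD]; split <;> exact le_max_right _ _
  have hDle : D ≤ 1 - |τ| := by
    rw [hD]; rcases le_or_gt τ 0 with h | h
    · rw [if_pos h, abs_of_nonpos h]
      exact max_le (by linarith [ht.1]) (by linarith [hτ.1])
    · rw [if_neg (not_le.mpr h), abs_of_pos h]
      exact max_le (by linarith [ht.2]) (by linarith [hτ.2])
  constructor
  · apply mul_nonneg (by positivity)
    have := Real.rpow_le_rpow hD0 hDle (by linarith : (0:ℝ) ≤ μ - 1)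
    linarith
  · have h1 : (1 - |τ|) ^ (μ - 1) - D ^ (μ - 1) ≤ (1 - |τ|) ^ (μ - 1) := by
      have := Real.rpow_nonneg hD0 (μ - 1); linarith
    exact mul_le_mul_of_nonneg_left h1 (by positivity)

open MeasureTheory Set Filter
theorem compactness_of_solutions (μ : ℝ) (hμ1 : 1 < μ) (hμ2 : μ ≤ 2)
    (q : ℝ → ℝ) (hq : ContinuousOn q (Set.Ioo (-1) 1))
    (hqnn : ∀ t ∈ Set.Ioo (-1 : ℝ) 1, 0 ≤ q t)
    (hqint : MeasureTheory.IntegrableOn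
      (fun t => (1 - |t|) ^ (μ - 1) * q t) (Set.Ioo (-1 : ℝ) 1))
    (x : ℕ → ℝ → ℝ) (g : ℕ → ℝ → ℝ)
    (hxc : ∀ n, ContinuousOn (x n) (Set.Icc (-1) 1))
    (hxsymm : ∀ n, ∀ t ∈ Set.Icc (-1 : ℝ) 1, x n t = x n (-t))
    (hgc : ∀ n, ContinuousOn (g n) (Set.Ioo (-1) 1))
    (hgbd : ∀ n, ∀ τ ∈ Set.Ioo (-1 : ℝ) 1, 0 ≤ g n τ ∧ g n τ ≤ q τ)
    (hrep : ∀ n, ∀ t ∈ Set.Icc (-1 : ℝ) 1,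
      x n t = ∫ τ in (-1 : ℝ)..1, greenG μ t τ * g n τ) :
    (∀ n, ∀ t ∈ Set.Icc (-1 : ℝ) 1,
      |x n t| ≤ (1 / Real.Gamma μ) *
        ∫ τ in (-1 : ℝ)..1, (1 - |τ|) ^ (μ - 1) * q τ) ∧
    EquicontinuousOn x (Set.Icc (-1 : ℝ) 1) ∧
    ∃ φ : ℕ → ℕ, StrictMono φ ∧ ∃ z : ℝ → ℝ,
      TendstoUniformlyOn (fun k => x (φ k)) z Filter.atTop
        (Set.Icc (-1 : ℝ) 1) := by
  have hΓ : 0 < Real.Gamma μ := Real.Gamma_pos_of_pos (by linarith)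
  set B : ℝ → ℝ := fun τ => (1 / Real.Gamma μ) * ((1 - |τ|) ^ (μ - 1) * q τ) with hBdef
  have hBint : IntegrableOn B (Set.Ioo (-1 : ℝ) 1) := hqint.const_mul _
  have hqm : AEStronglyMeasurable q (volume.restrict (Set.Ioo (-1:ℝ) 1)) :=
    hq.aestronglyMeasurable measurableSet_Ioo
  -- integrability of the integrands
  have hInt : ∀ n, ∀ t ∈ Set.Icc (-1:ℝ) 1,
      IntegrableOn (fun τ => greenG μ t τ * g n τ) (Set.Ioo (-1:ℝ) 1) := by
    intro n t ht
    apply Integrable.mono' hBint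
    · exact ((greenG_meas_τ hμ1 t).aestronglyMeasurable).mul
        ((hgc n).aestronglyMeasurable measurableSet_Ioo)
    · rw [ae_restrict_iff' measurableSet_Ioo]
      apply Eventually.of_forall
      intro τ hτ
      obtain ⟨hg0, hgq⟩ := hgbd n τ hτ
      obtain ⟨hG0, hGle⟩ := greenG_bounds hμ1 ht (Set.Ioo_subset_Icc_self hτ)
      rw [Real.norm_eq_abs, abs_mul, abs_of_nonneg hG0, abs_of_nonneg hg0, hBdef]
      calc greenG μ t τ * g n τ ≤ ((1/Real.Gamma μ) * (1-|τ|)^(μ-1)) * q τ :=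
            mul_le_mul hGle hgq hg0
            (mul_nonneg (one_div_nonneg.mpr hΓ.le)
              (Real.rpow_nonneg (by have := abs_lt.mpr ⟨hτ.1, hτ.2⟩; linarith) _))
        _ = _ := by ring
  -- representation over Ioo
  have hrep' : ∀ n, ∀ t ∈ Set.Icc (-1:ℝ) 1,
      x n t = ∫ τ in Set.Ioo (-1:ℝ) 1, greenG μ t τ * g n τ := by
    intro n t ht
    rw [hrep n t ht, intervalIntegral.integral_of_le (by norm_num : (-1:ℝ) ≤ 1),
      integral_Ioc_eq_integral_Ioo]
  -- Part 1: uniform bound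
  have hbound : ∀ n, ∀ t ∈ Set.Icc (-1 : ℝ) 1,
      |x n t| ≤ (1 / Real.Gamma μ) *
        ∫ τ in (-1 : ℝ)..1, (1 - |τ|) ^ (μ - 1) * q τ := by
    intro n t ht
    have hRHS : (1 / Real.Gamma μ) * ∫ τ in (-1 : ℝ)..1, (1 - |τ|) ^ (μ - 1) * q τ
        = ∫ τ in Set.Ioo (-1:ℝ) 1, B τ := by
      rw [intervalIntegral.integral_of_le (by norm_num : (-1:ℝ) ≤ 1),
        integral_Ioc_eq_integral_Ioo, hBdef, integral_const_mul]
    rw [hRHS, hrep' n t ht, ← Real.norm_eq_abs]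
    apply norm_integral_le_of_norm_le hBint
    rw [ae_restrict_iff' measurableSet_Ioo]
    apply Eventually.of_forall
    intro τ hτ
    obtain ⟨hg0, hgq⟩ := hgbd n τ hτ
    obtain ⟨hG0, hGle⟩ := greenG_bounds hμ1 ht (Set.Ioo_subset_Icc_self hτ)
    rw [Real.norm_eq_abs, abs_mul, abs_of_nonneg hG0, abs_of_nonneg hg0, hBdef]
    calc greenG μ t τ * g n τ ≤ ((1/Real.Gamma μ) * (1-|τ|)^(μ-1)) * q τ :=
          mul_le_mul hGle hgq hg0
            (mul_nonneg (one_div_nonneg.mpr hΓ.le)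
              (Real.rpow_nonneg (by have := abs_lt.mpr ⟨hτ.1, hτ.2⟩; linarith) _))
      _ = _ := by ring
  -- Part 2: equicontinuity
  have hequi : EquicontinuousOn x (Set.Icc (-1 : ℝ) 1) := by
    intro t₀ ht₀ U hU
    rw [Metric.mem_uniformity_dist] at hU
    obtain ⟨ε, hε, hUb⟩ := hU
    have hDmeas : ∀ t : ℝ, AEStronglyMeasurable
        (fun τ => |greenG μ t τ - greenG μ t₀ τ| * q τ)
        (volume.restrict (Set.Ioo (-1:ℝ) 1)) := fun t =>
      ((((greenG_meas_τ hμ1 t).sub (greenG_meas_τ hμ1 t₀)).abs).aestronglyMeasurable).mul hqm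
    have hDbd : ∀ t ∈ Set.Icc (-1:ℝ) 1, ∀ τ ∈ Set.Ioo (-1:ℝ) 1,
        |greenG μ t τ - greenG μ t₀ τ| * q τ ≤ 2 * B τ := by
      intro t ht τ hτ
      have hτ' := Set.Ioo_subset_Icc_self hτ
      obtain ⟨h1, h2⟩ := greenG_bounds hμ1 ht hτ'
      obtain ⟨h3, h4⟩ := greenG_bounds hμ1 ht₀ hτ'
      have habs : |greenG μ t τ - greenG μ t₀ τ| ≤ 2 * ((1/Real.Gamma μ) * (1-|τ|)^(μ-1)) := by
        rw [abs_sub_le_iff]; constructor <;> linarith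
      calc |greenG μ t τ - greenG μ t₀ τ| * q τ
          ≤ (2 * ((1/Real.Gamma μ) * (1-|τ|)^(μ-1))) * q τ :=
            mul_le_mul_of_nonneg_right habs (hqnn τ hτ)
        _ = 2 * B τ := by rw [hBdef]; ring
    have hDint : ∀ t ∈ Set.Icc (-1:ℝ) 1, IntegrableOn
        (fun τ => |greenG μ t τ - greenG μ t₀ τ| * q τ) (Set.Ioo (-1:ℝ) 1) := by
      intro t ht
      apply Integrable.mono' (hBint.const_mul 2) (hDmeas t)
      rw [ae_restrict_iff' measurableSet_Ioo]
      apply Eventually.of_forall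
      intro τ hτ
      rw [Real.norm_eq_abs, abs_mul, abs_abs, abs_of_nonneg (hqnn τ hτ)]
      exact hDbd t ht τ hτ
    set Φ : ℝ → ℝ := fun t => ∫ τ in Set.Ioo (-1:ℝ) 1,
      |greenG μ t τ - greenG μ t₀ τ| * q τ with hΦdef
    have hΦ0 : Φ t₀ = 0 := by simp [hΦdef]
    have hΦc : ContinuousWithinAt Φ (Set.Icc (-1:ℝ) 1) t₀ := by
      apply continuousWithinAt_of_dominated (bound := fun τ => 2 * B τ)
      · exact Eventually.of_forall fun t => hDmeas t
      · filter_upwards [eventually_mem_nhdsWithin] with t ht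
        rw [ae_restrict_iff' measurableSet_Ioo]
        apply Eventually.of_forall
        intro τ hτ
        rw [Real.norm_eq_abs, abs_mul, abs_abs, abs_of_nonneg (hqnn τ hτ)]
        exact hDbd t ht τ hτ
      · exact hBint.const_mul 2
      · apply Eventually.of_forall
        intro τ
        exact ((((greenG_cont_t hμ1 τ).sub continuous_const).abs).continuousWithinAt).mul
          continuousWithinAt_const
    have hlt : ∀ᶠ t in nhdsWithin t₀ (Set.Icc (-1:ℝ) 1), Φ t < ε := by
      have h2 : Tendsto Φ (nhdsWithin t₀ (Set.Icc (-1:ℝ) 1)) (nhds 0) := by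
        have := hΦc; rwa [ContinuousWithinAt, hΦ0] at this
      exact h2.eventually_lt_const hε
    filter_upwards [hlt, eventually_mem_nhdsWithin] with t hΦt htmem n
    apply hUb
    rw [Real.dist_eq]
    have key : |x n t₀ - x n t| ≤ Φ t := by
      rw [hrep' n t₀ ht₀, hrep' n t htmem,
        ← integral_sub (hInt n t₀ ht₀) (hInt n t htmem), ← Real.norm_eq_abs, hΦdef]
      apply norm_integral_le_of_norm_le (hDint t htmem)
      rw [ae_restrict_iff' measurableSet_Ioo]
      apply Eventually.of_forall
      intro τ hτ
      obtain ⟨hg0, hgq⟩ := hgbd n τ hτ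
      rw [← sub_mul, Real.norm_eq_abs, abs_mul, abs_of_nonneg hg0, abs_sub_comm]
      exact mul_le_mul_of_nonneg_left hgq (abs_nonneg _)
    exact lt_of_le_of_lt key hΦt
  refine ⟨hbound, hequi, ?_⟩
  -- Part 3: Arzelà–Ascoli
  haveI : CompactSpace ↥(Set.Icc (-1:ℝ) 1) := isCompact_iff_compactSpace.mp isCompact_Icc
  set C : ℝ := (1 / Real.Gamma μ) * ∫ τ in (-1 : ℝ)..1, (1 - |τ|) ^ (μ - 1) * q τ with hCdef
  set F : ℕ → ↥(Set.Icc (-1:ℝ) 1) → ℝ := fun n => (Set.Icc (-1:ℝ) 1).restrict (x n) with hFdef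
  have hFeq : Equicontinuous F := by
    intro p U hU
    have h := hequi p.1 p.2 U hU
    rw [← map_nhds_subtype_val p, Filter.eventually_map] at h
    exact h
  set A : Set (↥(Set.Icc (-1:ℝ) 1) → ℝ) := closure (Set.range F) with hAdef
  have hsub : Set.range F ⊆ Set.univ.pi (fun _ => Set.Icc (-C) C) := by
    rintro G ⟨n, rfl⟩ p _
    exact Set.mem_Icc.mpr (abs_le.mp (hbound n p.1 p.2))
  have hAcp : IsCompact A := IsCompact.of_isClosed_subset
    (isCompact_univ_pi fun _ => isCompact_Icc) isClosed_closure
    (closure_minimal hsub (isClosed_set_pi fun _ _ => isClosed_Icc))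
  have hAe : A.Equicontinuous := Set.Equicontinuous.closure (equicontinuous_iff_range.mp hFeq)
  have hAcont : ∀ G ∈ A, Continuous G := fun G hG => hAe.continuous ⟨G, hG⟩
  set S : Set C(↥(Set.Icc (-1:ℝ) 1), ℝ) := {h | ⇑h ∈ A} with hSdef
  have hSim : ContinuousMap.toFun '' S = A := by
    ext G
    constructor
    · rintro ⟨h, hh, rfl⟩; exact hh
    · intro hG; exact ⟨⟨G, hAcont G hG⟩, hG, rfl⟩
  have hSeq : Equicontinuous ((↑) : S → ↥(Set.Icc (-1:ℝ) 1) → ℝ) := by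
    have := hAe.comp (fun h : S => (⟨⇑h.1, h.2⟩ : A))
    exact this
  have hScp : IsCompact S := ArzelaAscoli.isCompact_of_equicontinuous S (hSim ▸ hAcp) hSeq
  set f : ℕ → C(↥(Set.Icc (-1:ℝ) 1), ℝ) := fun n => ⟨F n, hFeq.continuous n⟩ with hfdef
  have hmem : ∀ n, f n ∈ S := fun n => subset_closure ⟨n, rfl⟩
  obtain ⟨a, -, φ, hφ, hconv⟩ := hScp.tendsto_subseq hmem
  refine ⟨φ, hφ, fun t => if h : t ∈ Set.Icc (-1:ℝ) 1 then a ⟨t, h⟩ else 0, ?_⟩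
  have huniv := ContinuousMap.tendsto_iff_forall_isCompact_tendstoUniformlyOn.mp hconv
    Set.univ isCompact_univ
  rw [Metric.tendstoUniformlyOn_iff] at huniv ⊢
  intro ε hε
  filter_upwards [huniv ε hε] with k hk t ht
  have h2 := hk ⟨t, ht⟩ (Set.mem_univ _)
  have hz : (if h : t ∈ Set.Icc (-1:ℝ) 1 then a ⟨t, h⟩ else 0) = a ⟨t, ht⟩ := dif_pos ht
  rw [hz]
  exact h2
end
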